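/- arXiv:2312.12673 — 2 statements merged into one kernel-verified Lean document; each statement's English description precedes it below -/
import Mathlib

section
/- Let H be a nonempty finite graph, fix n ≥ v(H) and η ∈ [0,1]. Then lim_{p→0⁺} p^{−1}·Φ_p(H,η) = Φ(H,η). -/
open scoped BigOperators

attribute [local instance] Classical.propDecidable

noncomputable section

namespace LowerTails

/-- The edge set of the complete graph `K_n`: unordered pairs of distinct elements of `Fin n`. -/
abbrev Edge (n : ℕ) := {e : Sym2 (Fin n) // ¬ e.IsDiag}

/-- A graph on `[n]`, identified with its edge-indicator vector in `{0,1}^{E(K_n)}`. -/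
abbrev EGraph (n : ℕ) := Edge n → Bool

/-- The probability of the configuration `G` under the product measure where edge `e`
is present independently with probability `q e`. -/
def wt {n : ℕ} (q : Edge n → ℝ) (G : EGraph n) : ℝ :=
  ∏ e : Edge n, if G e then q e else 1 - q e

/-- Probability of the event `S` under `G(n, q)`. -/
def pr {n : ℕ} (q : Edge n → ℝ) (S : Set (EGraph n)) : ℝ :=
  ∑ G : EGraph n, if G ∈ S then wt q G else 0

/-- Conditional probability of `S` given `L` under `G(n, q)`. -/
def cpr {n : ℕ} (q : Edge n → ℝ) (L S : Set (EGraph n)) : ℝ :=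
  pr q (S ∩ L) / pr q L

/-- Conditional expectation of `f` given the event `L` under `G(n, q)`. -/
def cex {n : ℕ} (q : Edge n → ℝ) (L : Set (EGraph n)) (f : EGraph n → ℝ) : ℝ :=
  (∑ G : EGraph n, if G ∈ L then wt q G * f G else 0) / pr q L

/-- The simple graph on `Fin n` associated to an edge-indicator vector. -/
def toSG {n : ℕ} (G : EGraph n) : SimpleGraph (Fin n) :=
  SimpleGraph.fromEdgeSet {e : Sym2 (Fin n) | ∃ h : ¬e.IsDiag, G ⟨e, h⟩ = true}

/-- The number of copies of `H` in `G`, i.e. the number of subgraphs of `G` isomorphic to `H`. -/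
def countCopies {k n : ℕ} (H : SimpleGraph (Fin k)) (G : SimpleGraph (Fin n)) : ℕ :=
  Set.ncard {K : G.Subgraph | Nonempty (H ≃g K.coe)}

/-- `N_H(G)` for an edge-indicator vector `G`, as a real number. -/
def NH {k n : ℕ} (H : SimpleGraph (Fin k)) (G : EGraph n) : ℝ :=
  countCopies H (toSG G)

/-- `E[N_H(q)]`, the expected number of copies of `H` in `G(n, q)`. -/
def expNH {k : ℕ} (H : SimpleGraph (Fin k)) {n : ℕ} (q : Edge n → ℝ) : ℝ :=
  ∑ G : EGraph n, wt q G * NH H G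

/-- `N_H(K_n)`, the number of copies of `H` in the complete graph `K_n`. -/
def NHKn {k : ℕ} (H : SimpleGraph (Fin k)) (n : ℕ) : ℝ :=
  countCopies H (⊤ : SimpleGraph (Fin n))

/-- The lower tail event `L_p(H, η) = {G : N_H(G) ≤ η E[N_H(p)]}`. -/
def lowerTail {k : ℕ} (H : SimpleGraph (Fin k)) (n : ℕ) (p η : ℝ) : Set (EGraph n) :=
  {G | NH H G ≤ η * expNH H (fun _ : Edge n => p)}

/-- `h(x) = x log x - x + 1` (with `h(0) = 1` since `Real.log 0 = 0`). -/
def hfun (x : ℝ) : ℝ := x * Real.log x - x + 1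

/-- The relative entropy `i_p(t)` of `Ber(t)` with respect to `Ber(p)`. -/
def ip (p t : ℝ) : ℝ := t * Real.log (t / p) + (1 - t) * Real.log ((1 - t) / (1 - p))

/-- The number of edges of `H` as a real number. -/
def eH {k : ℕ} (H : SimpleGraph (Fin k)) : ℝ := H.edgeSet.ncard

/-- The defining equation of the threshold `η_H`, for a graph with `e` edges. -/
def etaEq (e η : ℝ) : Prop :=
  hfun (η ^ (1 / η)) =
    hfun (η ^ (1 / e)) + η ^ (1 / e) * Real.log (η ^ (1 / e)) *
      (Real.log (η ^ (1 / η)) - Real.log (η ^ (1 / e)))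

/-- The 2-density `m_2(H)`. -/
def m2 {k : ℕ} (H : SimpleGraph (Fin k)) : ℝ :=
  sSup {x : ℝ | ∃ F : H.Subgraph, 2 ≤ F.edgeSet.ncard ∧
    x = ((F.edgeSet.ncard : ℝ) - 1) / ((F.verts.ncard : ℝ) - 2)}

/-- The variational problem `Φ_p(H, η)`. -/
def PhiP {k : ℕ} (H : SimpleGraph (Fin k)) (n : ℕ) (p η : ℝ) : ℝ :=
  sInf {x : ℝ | ∃ q : Edge n → ℝ, (∀ e, q e ∈ Set.Icc (0:ℝ) 1) ∧
    expNH H q ≤ η * expNH H (fun _ : Edge n => p) ∧ x = ∑ e : Edge n, ip p (q e)}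

/-- The sparse limit variational problem `Φ(H, η)`. -/
def Phi {k : ℕ} (H : SimpleGraph (Fin k)) (n : ℕ) (η : ℝ) : ℝ :=
  sInf {x : ℝ | ∃ q : Edge n → ℝ, (∀ e, q e ∈ Set.Icc (0:ℝ) 1) ∧
    expNH H q ≤ η * NHKn H n ∧ x = ∑ e : Edge n, hfun (q e)}

/-- The cut norm of an `n × n` real matrix. -/
def cutNorm {n : ℕ} (M : Matrix (Fin n) (Fin n) ℝ) : ℝ :=
  sSup {x : ℝ | ∃ a b : Fin n → ℝ, (∀ i, a i ∈ Set.Icc (0:ℝ) 1) ∧ (∀ i, b i ∈ Set.Icc (0:ℝ) 1) ∧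
    x = |∑ i : Fin n, ∑ j : Fin n, a i * M i j * b j| / (n : ℝ) ^ 2}

/-- The symmetric matrix with entries `q_{ij} - c` off the diagonal, `0` on the diagonal. -/
def devMat {n : ℕ} (q : Edge n → ℝ) (c : ℝ) : Matrix (Fin n) (Fin n) ℝ :=
  fun i j => if h : i = j then 0 else q ⟨s(i, j), by simp [Sym2.mk_isDiag_iff, h]⟩ - c

/-- The edge-indicator vector of `G` as a real vector. -/
def ind {n : ℕ} (G : EGraph n) : Edge n → ℝ := fun e => if G e then 1 else 0

/-- `Y_A = ∏_{e ∈ A} Y_e`. -/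
def YA {n : ℕ} (A : Finset (Edge n)) (G : EGraph n) : ℝ :=
  ∏ e ∈ A, (if G e then (1:ℝ) else 0)

/-- The event that a configuration agrees with `G0` on the set `W`. -/
def agreeOn {n : ℕ} (W : Finset (Edge n)) (G0 : EGraph n) : Set (EGraph n) :=
  {G | ∀ w ∈ W, G w = G0 w}

/-- The conditional expectation `E[f | (Y_w)_{w ∈ W}]` under the pmf `μ`, evaluated
at the outcome `G0` (i.e. given that `Y` agrees with `G0` on `W`). -/
def condExpW {n : ℕ} (μ : EGraph n → ℝ) (W : Finset (Edge n)) (f : EGraph n → ℝ)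
    (G0 : EGraph n) : ℝ :=
  (∑ G : EGraph n, if G ∈ agreeOn W G0 then μ G * f G else 0) /
    (∑ G : EGraph n, if G ∈ agreeOn W G0 then μ G else 0)

/-- The pmf of `G(n, p)` conditioned on the lower tail event `L_p(H, η)`. -/
def ltPMF {k : ℕ} (H : SimpleGraph (Fin k)) (n : ℕ) (p η : ℝ) : EGraph n → ℝ :=
  fun G => (if G ∈ lowerTail H n p η then wt (fun _ : Edge n => p) G else 0) /
    pr (fun _ : Edge n => p) (lowerTail H n p η)

/-- The hyperedges of the hypergraph `H(H)`: edge sets of copies of `H` in `K_n`. -/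
def copySets {k : ℕ} (H : SimpleGraph (Fin k)) (n : ℕ) : Finset (Finset (Edge n)) :=
  Finset.univ.filter (fun A => ∃ f : Fin k ↪ Fin n,
    ∀ e : Edge n, e ∈ A ↔ ∃ u v : Fin k, H.Adj u v ∧ (e : Sym2 (Fin n)) = s(f u, f v))

/-- The correlation `D_W(B, b)` as a random variable (a function of the outcome `G0`). -/
def DW {n : ℕ} (μ : EGraph n → ℝ) (W : Finset (Edge n)) (B : Finset (Edge n)) (b : Edge n)
    (G0 : EGraph n) : ℝ :=
  condExpW μ W (YA B) G0 - condExpW μ W (YA (B.erase b)) G0 * condExpW μ W (YA {b}) G0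

/-- The energy `E_H(W)` of a set `W` with respect to the pmf `μ`. -/
def energy {k n : ℕ} (H : SimpleGraph (Fin k)) (μ : EGraph n → ℝ) (p : ℝ)
    (W : Finset (Edge n)) : ℝ :=
  ∑ G0 : EGraph n, μ G0 *
    ∑ A ∈ (copySets H n).filter (fun A => Disjoint A W),
      ∑ B ∈ A.powerset.filter (fun B => 2 ≤ B.card),
        ∑ b ∈ B, (DW μ W B b G0) ^ 2 /
          ((Nat.choose H.edgeSet.ncard B.card : ℝ) * (B.card : ℝ) * p ^ (2 * B.card))

end LowerTails

namespace LowerTails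

instance subgraphFinite {V : Type*} [Finite V] (G : SimpleGraph V) :
    Finite G.Subgraph :=
  Finite.of_injective (fun K => (K.verts, K.Adj)) (fun K L h => by
    simp only [Prod.mk.injEq] at h
    ext v w
    · exact h.1 ▸ Iff.rfl
    · exact h.2 ▸ Iff.rfl)

noncomputable instance {n : ℕ} : Fintype ((⊤ : SimpleGraph (Fin n)).Subgraph) :=
  Fintype.ofFinite _

def copiesTop {k : ℕ} (H : SimpleGraph (Fin k)) (n : ℕ) :
    Finset ((⊤ : SimpleGraph (Fin n)).Subgraph) :=
  Finset.univ.filter fun K => Nonempty (H ≃g K.coe)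

def edgesOf {n : ℕ} (K : (⊤ : SimpleGraph (Fin n)).Subgraph) : Finset (Edge n) :=
  Finset.univ.filter fun e => (e : Sym2 (Fin n)) ∈ K.edgeSet

lemma card_edgesOf {n : ℕ} (K : (⊤ : SimpleGraph (Fin n)).Subgraph) :
    (edgesOf K).card = K.edgeSet.ncard := by
  have himg : Subtype.val '' (↑(edgesOf K) : Set (Edge n)) = K.edgeSet := by
    ext s
    simp only [Set.mem_image, Finset.mem_coe, edgesOf, Finset.mem_filter, Finset.mem_univ,
      true_and]
    constructor
    · rintro ⟨e, he, rfl⟩; exact he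
    · intro hs
      have hnd : ¬ s.IsDiag := by
        induction s with
        | _ u v =>
          rw [SimpleGraph.Subgraph.mem_edgeSet] at hs
          simpa [Sym2.mk_isDiag_iff] using (K.adj_sub hs).ne
      exact ⟨⟨s, hnd⟩, hs, rfl⟩
  rw [← himg, Set.ncard_image_of_injective _ Subtype.val_injective, Set.ncard_coe_finset]



lemma toSG_adj {n : ℕ} (G : EGraph n) (u v : Fin n) :
    (toSG G).Adj u v ↔ ∃ h : ¬ (s(u,v) : Sym2 (Fin n)).IsDiag, G ⟨s(u,v), h⟩ = true := by
  rw [toSG, SimpleGraph.fromEdgeSet_adj]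
  constructor
  · rintro ⟨h1, _⟩; exact h1
  · rintro ⟨h, hG⟩
    exact ⟨⟨h, hG⟩, by simpa [Sym2.mk_isDiag_iff] using h⟩

/-- The embedding of subgraphs of `toSG G` into subgraphs of `⊤`. -/
def liftSub {n : ℕ} (G : EGraph n) (K : (toSG G).Subgraph) :
    (⊤ : SimpleGraph (Fin n)).Subgraph where
  verts := K.verts
  Adj := K.Adj
  adj_sub := fun h => by simpa using (K.adj_sub h).ne
  edge_vert := K.edge_vert
  symm := K.symm

lemma NH_eq {k n : ℕ} (H : SimpleGraph (Fin k)) (G : EGraph n) :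
    NH H G = ((copiesTop H n).filter fun K => ∀ e ∈ edgesOf K, G e = true).card := by
  have hinj : Function.Injective (liftSub G) := by
    intro K L h
    have h1 : (liftSub G K).verts = (liftSub G L).verts := by rw [h]
    have h2 : (liftSub G K).Adj = (liftSub G L).Adj := by rw [h]
    ext v w
    · exact h1 ▸ Iff.rfl
    · exact h2 ▸ Iff.rfl
  have himg : (liftSub G) '' {K : (toSG G).Subgraph | Nonempty (H ≃g K.coe)} =
      ↑((copiesTop H n).filter fun K => ∀ e ∈ edgesOf K, G e = true) := by
    ext L
    simp only [Set.mem_image, Set.mem_setOf_eq, Finset.coe_filter, Finset.mem_filter,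
      copiesTop, Finset.mem_univ, true_and, Set.mem_setOf_eq]
    constructor
    · rintro ⟨K, hK, rfl⟩
      refine ⟨⟨(hK.some.trans ⟨Equiv.refl _, fun {a b} => Iff.rfl⟩ : H ≃g (liftSub G K).coe)⟩, ?_⟩
      intro e he
      rw [edgesOf, Finset.mem_filter] at he
      obtain ⟨-, he⟩ := he
      obtain ⟨s, hnd⟩ := e
      induction s with
      | _ u v =>
        rw [SimpleGraph.Subgraph.mem_edgeSet] at he
        have : (toSG G).Adj u v := K.adj_sub he
        rw [toSG_adj] at this
        obtain ⟨h, hG⟩ := this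
        exact hG
    · rintro ⟨⟨iso⟩, hall⟩
      refine ⟨⟨L.verts, L.Adj, ?_, L.edge_vert, L.symm⟩, ⟨iso.trans ⟨Equiv.refl _, fun {a b} => Iff.rfl⟩⟩, ?_⟩
      · intro u v h
        have hne : u ≠ v := (L.adj_sub h).ne
        have hnd : ¬ (s(u,v) : Sym2 (Fin n)).IsDiag := by simpa [Sym2.mk_isDiag_iff] using hne
        have hmem : (⟨s(u,v), hnd⟩ : Edge n) ∈ edgesOf L := by
          rw [edgesOf, Finset.mem_filter]
          exact ⟨Finset.mem_univ _, SimpleGraph.Subgraph.mem_edgeSet.mpr h⟩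
        have := hall _ hmem
        rw [toSG_adj]
        exact ⟨hnd, this⟩
      · rfl
  rw [NH, countCopies]
  rw [← Set.ncard_image_of_injective _ hinj, himg, Set.ncard_coe_finset]



lemma sum_wt_prod {n : ℕ} (q : Edge n → ℝ) (A : Finset (Edge n)) :
    ∑ G : EGraph n, wt q G * (if ∀ e ∈ A, G e = true then (1:ℝ) else 0) = ∏ e ∈ A, q e := by
  have key : ∀ G : EGraph n, wt q G * (if ∀ e ∈ A, G e = true then (1:ℝ) else 0) =
      ∏ e : Edge n, ((if G e then q e else 1 - q e) *
        (if e ∈ A then (if G e then (1:ℝ) else 0) else 1)) := by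
    intro G
    rw [Finset.prod_mul_distrib]
    congr 1
    rw [Finset.prod_ite_mem, Finset.univ_inter, Finset.prod_boole]
    congr 1
  simp only [key]
  rw [← Fintype.prod_sum (f := fun (e : Edge n) (b : Bool) =>
    (if b then q e else 1 - q e) * (if e ∈ A then (if b then (1:ℝ) else 0) else 1))]
  have : ∀ e : Edge n, (∑ b : Bool, (if b then q e else 1 - q e) *
      (if e ∈ A then (if b then (1:ℝ) else 0) else 1)) = if e ∈ A then q e else 1 := by
    intro e
    rw [Fintype.sum_bool]
    by_cases h : e ∈ A <;> simp [h] <;> ring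
  rw [Finset.prod_congr rfl fun e _ => this e, Finset.prod_ite_mem, Finset.univ_inter]


lemma expNH_eq {k n : ℕ} (H : SimpleGraph (Fin k)) (q : Edge n → ℝ) :
    expNH H q = ∑ K ∈ copiesTop H n, ∏ e ∈ edgesOf K, q e := by
  rw [expNH]
  have : ∀ G : EGraph n, wt q G * NH H G =
      ∑ K ∈ copiesTop H n, wt q G * (if ∀ e ∈ edgesOf K, G e = true then (1:ℝ) else 0) := by
    intro G
    rw [← Finset.mul_sum, NH_eq]
    congr 1
    rw [Finset.sum_boole]
  rw [Finset.sum_congr rfl fun G _ => this G, Finset.sum_comm]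
  exact Finset.sum_congr rfl fun K _ => sum_wt_prod q (edgesOf K)

lemma card_edgesOf_copy {k n : ℕ} {H : SimpleGraph (Fin k)}
    {K : (⊤ : SimpleGraph (Fin n)).Subgraph} (hK : K ∈ copiesTop H n) :
    (edgesOf K).card = H.edgeSet.ncard := by
  rw [card_edgesOf]
  rw [copiesTop, Finset.mem_filter] at hK
  obtain ⟨-, ⟨iso⟩⟩ := hK
  have h1 : H.edgeSet.ncard = K.coe.edgeSet.ncard := by
    rw [← Nat.card_coe_set_eq, ← Nat.card_coe_set_eq]
    exact Nat.card_congr iso.mapEdgeSet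
  have h2 : K.edgeSet = Sym2.map (Subtype.val) '' K.coe.edgeSet :=
    (SimpleGraph.Subgraph.image_coe_edgeSet_coe K).symm
  rw [h1, h2, Set.ncard_image_of_injective _ (Sym2.map.injective Subtype.val_injective)]

lemma NHKn_eq {k : ℕ} (H : SimpleGraph (Fin k)) (n : ℕ) :
    NHKn H n = (copiesTop H n).card := by
  rw [NHKn, countCopies]
  congr 1
  have : {K : (⊤ : SimpleGraph (Fin n)).Subgraph | Nonempty (H ≃g K.coe)} =
      ↑(copiesTop H n) := by
    ext K; simp [copiesTop]
  rw [this, Set.ncard_coe_finset]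



lemma mul_log_div_ge {a b : ℝ} (ha : 0 ≤ a) (hb : 0 < b) : a - b ≤ a * Real.log (a / b) := by
  rcases eq_or_lt_of_le ha with rfl | ha'
  · simp; linarith
  · have hba : 0 < b / a := div_pos hb ha'
    have h := Real.log_le_sub_one_of_pos hba
    have hlog : Real.log (a / b) = - Real.log (b / a) := by
      rw [← Real.log_inv, inv_div]
    rw [hlog]
    have := mul_le_mul_of_nonneg_left h (le_of_lt ha')
    have hd : a * (b / a) = b := by field_simp
    nlinarith
lemma hfun_nonneg {t : ℝ} (ht : 0 ≤ t) : 0 ≤ hfun t := by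
  have := mul_log_div_ge ht one_pos
  rw [div_one] at this
  rw [hfun]; linarith

lemma ip_nonneg {p t : ℝ} (hp : 0 < p) (hp1 : p < 1) (ht0 : 0 ≤ t) (ht1 : t ≤ 1) :
    0 ≤ ip p t := by
  have h1 := mul_log_div_ge ht0 hp
  have h2 := mul_log_div_ge (by linarith : (0:ℝ) ≤ 1 - t) (by linarith : (0:ℝ) < 1 - p)
  rw [ip]; linarith

lemma ip_self {p : ℝ} (hp : 0 < p) (hp1 : p < 1) : ip p p = 0 := by
  rw [ip, div_self hp.ne', div_self (by linarith : (1:ℝ) - p ≠ 0), Real.log_one]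
  ring

lemma log_one_sub_le {x : ℝ} (h0 : 0 ≤ x) (h1 : x < 1) : Real.log (1 - x) ≤ -x := by
  have := Real.log_le_sub_one_of_pos (by linarith : (0:ℝ) < 1 - x)
  linarith

lemma log_one_sub_ge {x : ℝ} (h0 : 0 ≤ x) (h1 : x ≤ 1/2) :
    -x - 2*x^2 ≤ Real.log (1 - x) := by
  have hx1 : (0:ℝ) < 1 - x := by linarith
  have h := Real.one_sub_inv_le_log_of_pos hx1
  have hinv : 1 - (1 - x)⁻¹ = -x / (1 - x) := by field_simp; ring
  rw [hinv] at h
  have key : -x - 2*x^2 ≤ -x / (1 - x) := by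
    rw [le_div_iff₀ hx1]
    nlinarith
  linarith [le_trans key h]

lemma ip_approx {p t : ℝ} (hp : 0 < p) (hp2 : p ≤ 1/2) (ht0 : 0 ≤ t) (ht1 : t ≤ 1) :
    |ip p (p * t) - p * hfun t| ≤ 3 * p ^ 2 := by
  set u := p * t with hu
  have hu0 : 0 ≤ u := mul_nonneg hp.le ht0
  have hup : u ≤ p := by nlinarith
  have h1u : (0:ℝ) < 1 - u := by linarith
  have h1p : (0:ℝ) < 1 - p := by linarith
  have hdivt : p * t / p = t := by field_simp
  have hlogdiv : Real.log ((1 - u) / (1 - p)) = Real.log (1 - u) - Real.log (1 - p) :=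
    Real.log_div h1u.ne' h1p.ne'
  set L := Real.log (1 - u) - Real.log (1 - p) with hL
  have hiprw : ip p (p * t) = p * t * Real.log t + (1 - u) * L := by
    rw [ip, hdivt, hlogdiv]
  have hdiff : ip p (p * t) - p * hfun t = (1 - u) * (L - (p - u)) - u * (p - u) := by
    rw [hiprw, hfun]; ring
  have a1 := log_one_sub_le hu0 (by linarith : u < 1)
  have a2 := log_one_sub_ge hp.le hp2
  have a3 := log_one_sub_le hp.le (by linarith : p < 1)
  have a4 := log_one_sub_ge hu0 (by linarith : u ≤ 1/2)
  have hLub : L ≤ (p - u) + 2*p^2 := by rw [hL]; linarith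
  have hLlb : (p - u) - 2*p^2 ≤ L := by
    rw [hL]
    nlinarith
  rw [hdiff, abs_le]
  constructor <;> nlinarith


-- now the real work
variable {k n : ℕ}

lemma expNH_mono (H : SimpleGraph (Fin k)) {q q' : Edge n → ℝ}
    (h0 : ∀ e, 0 ≤ q e) (hle : ∀ e, q e ≤ q' e) : expNH H q ≤ expNH H q' := by
  rw [expNH_eq, expNH_eq]
  refine Finset.sum_le_sum fun K _ => Finset.prod_le_prod (fun e _ => h0 e) (fun e _ => hle e)

lemma expNH_smul (H : SimpleGraph (Fin k)) (p : ℝ) (x : Edge n → ℝ) :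
    expNH H (fun e => p * x e) = p ^ H.edgeSet.ncard * expNH H x := by
  rw [expNH_eq, expNH_eq, Finset.mul_sum]
  refine Finset.sum_congr rfl fun K hK => ?_
  rw [Finset.prod_mul_distrib, Finset.prod_const, card_edgesOf_copy hK]

lemma expNH_const (H : SimpleGraph (Fin k)) (p : ℝ) :
    expNH H (fun _ : Edge n => p) = p ^ H.edgeSet.ncard * NHKn H n := by
  have := expNH_smul H p (fun _ : Edge n => 1)
  simp only [mul_one] at this
  rw [this, NHKn_eq, expNH_eq]
  simp

lemma edgeSet_ncard_pos (H : SimpleGraph (Fin k)) (hH : H.edgeSet.Nonempty) :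
    0 < H.edgeSet.ncard := by
  rw [Set.ncard_pos (Set.toFinite _)]
  exact hH

lemma expNH_zero (H : SimpleGraph (Fin k)) (hH : H.edgeSet.Nonempty) :
    expNH H (fun _ : Edge n => (0:ℝ)) = 0 := by
  have h := expNH_const H (n := n) 0
  rw [h, zero_pow (edgeSet_ncard_pos H hH).ne', zero_mul]

section Var
variable (H : SimpleGraph (Fin k)) (η : ℝ)

/-- The feasible-value set of `Phi`. -/
def Tset (H : SimpleGraph (Fin k)) (n : ℕ) (η : ℝ) : Set ℝ :=
  {x : ℝ | ∃ q : Edge n → ℝ, (∀ e, q e ∈ Set.Icc (0:ℝ) 1) ∧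
    expNH H q ≤ η * NHKn H n ∧ x = ∑ e : Edge n, hfun (q e)}

/-- The feasible-value set of `PhiP`. -/
def Sset (H : SimpleGraph (Fin k)) (n : ℕ) (p η : ℝ) : Set ℝ :=
  {x : ℝ | ∃ q : Edge n → ℝ, (∀ e, q e ∈ Set.Icc (0:ℝ) 1) ∧
    expNH H q ≤ η * expNH H (fun _ : Edge n => p) ∧ x = ∑ e : Edge n, ip p (q e)}

lemma Phi_eq_sInf : Phi H n η = sInf (Tset H n η) := rfl
lemma PhiP_eq_sInf (p : ℝ) : PhiP H n p η = sInf (Sset H n p η) := rfl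

lemma NHKn_nonneg : 0 ≤ NHKn H n := by rw [NHKn_eq]; positivity

lemma Tset_nonempty (hH : H.edgeSet.Nonempty) (hη0 : 0 ≤ η) :
    (Tset H n η).Nonempty := by
  refine ⟨∑ e : Edge n, hfun 0, fun _ => 0, fun e => ⟨le_refl _, zero_le_one⟩, ?_, rfl⟩
  rw [expNH_zero H hH]
  exact mul_nonneg hη0 (NHKn_nonneg H)

lemma Tset_bddBelow : BddBelow (Tset H n η) := by
  refine ⟨0, fun x hx => ?_⟩
  obtain ⟨q, hq, -, rfl⟩ := hx
  exact Finset.sum_nonneg fun e _ => hfun_nonneg (hq e).1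

lemma Sset_nonempty (hH : H.edgeSet.Nonempty) (hη0 : 0 ≤ η) {p : ℝ} (hp : 0 < p) :
    (Sset H n p η).Nonempty := by
  refine ⟨∑ e : Edge n, ip p 0, fun _ => 0, fun e => ⟨le_refl _, zero_le_one⟩, ?_, rfl⟩
  rw [expNH_zero H hH, expNH_const]
  exact mul_nonneg hη0 (mul_nonneg (pow_nonneg hp.le _) (NHKn_nonneg H))

lemma Sset_bddBelow {p : ℝ} (hp : 0 < p) (hp1 : p < 1) : BddBelow (Sset H n p η) := by
  refine ⟨0, fun x hx => ?_⟩
  obtain ⟨q, hq, -, rfl⟩ := hx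
  exact Finset.sum_nonneg fun e _ => ip_nonneg hp hp1 (hq e).1 (hq e).2

lemma sum_split (p : ℝ) (f : Edge n → ℝ) :
    ∑ e : Edge n, (p * f e + 3 * p ^ 2) =
      p * (∑ e : Edge n, f e) + 3 * p ^ 2 * (Fintype.card (Edge n) : ℝ) := by
  rw [Finset.sum_add_distrib, ← Finset.mul_sum, Finset.sum_const, nsmul_eq_mul,
    Finset.card_univ]
  ring

/-- Upper bound: `PhiP ≤ p * Phi + 3 p² |E|`. -/
lemma PhiP_le (hH : H.edgeSet.Nonempty) (hη0 : 0 ≤ η) {p : ℝ} (hp : 0 < p) (hp2 : p ≤ 1/2) :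
    PhiP H n p η ≤ p * Phi H n η + 3 * p ^ 2 * (Fintype.card (Edge n) : ℝ) := by
  have hp1 : p < 1 := by linarith
  have key : ∀ t ∈ Tset H n η,
      PhiP H n p η ≤ p * t + 3 * p ^ 2 * (Fintype.card (Edge n) : ℝ) := by
    rintro t ⟨q, hq, hfeas, rfl⟩
    have hmem : (∑ e : Edge n, ip p (p * q e)) ∈ Sset H n p η := by
      refine ⟨fun e => p * q e, fun e => ⟨mul_nonneg hp.le (hq e).1, ?_⟩, ?_, rfl⟩
      · have := mul_le_mul_of_nonneg_left (hq e).2 hp.le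
        simpa using this.trans (by linarith : p * 1 ≤ 1)
      · rw [expNH_smul, expNH_const]
        calc p ^ H.edgeSet.ncard * expNH H q
            ≤ p ^ H.edgeSet.ncard * (η * NHKn H n) :=
              mul_le_mul_of_nonneg_left hfeas (pow_nonneg hp.le _)
          _ = η * (p ^ H.edgeSet.ncard * NHKn H n) := by ring
    have h1 : PhiP H n p η ≤ ∑ e : Edge n, ip p (p * q e) :=
      csInf_le (Sset_bddBelow H η hp hp1) hmem
    have h2 : (∑ e : Edge n, ip p (p * q e)) ≤
        ∑ e : Edge n, (p * hfun (q e) + 3 * p ^ 2) := by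
      refine Finset.sum_le_sum fun e _ => ?_
      have := (abs_le.mp (ip_approx hp hp2 (hq e).1 (hq e).2)).2
      linarith
    rw [sum_split] at h2
    linarith [h1.trans h2]
  have hlb : (PhiP H n p η - 3 * p ^ 2 * (Fintype.card (Edge n) : ℝ)) / p ∈
      lowerBounds (Tset H n η) := by
    intro t ht
    rw [div_le_iff₀ hp]
    linarith [key t ht, mul_comm t p]
  have hfin := le_csInf (Tset_nonempty H η hH hη0) hlb
  rw [div_le_iff₀ hp] at hfin
  rw [Phi_eq_sInf]
  linarith [mul_comm (sInf (Tset H n η)) p]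

/-- Lower bound: `p * Phi - 3 p² |E| ≤ PhiP`. -/
lemma le_PhiP (hH : H.edgeSet.Nonempty) (hη0 : 0 ≤ η) {p : ℝ} (hp : 0 < p) (hp2 : p ≤ 1/2) :
    p * Phi H n η - 3 * p ^ 2 * (Fintype.card (Edge n) : ℝ) ≤ PhiP H n p η := by
  have hp1 : p < 1 := by linarith
  refine le_csInf (Sset_nonempty H η hH hη0 hp) ?_
  rintro s ⟨q, hq, hfeas, rfl⟩
  -- truncate q at p
  set q' : Edge n → ℝ := fun e => min (q e) p with hq'
  have hq'0 : ∀ e, 0 ≤ q' e := fun e => le_min (hq e).1 hp.le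
  have hq'le : ∀ e, q' e ≤ q e := fun e => min_le_left _ _
  have hq'p : ∀ e, q' e ≤ p := fun e => min_le_right _ _
  have hfeas' : expNH H q' ≤ η * expNH H (fun _ : Edge n => p) :=
    le_trans (expNH_mono H hq'0 hq'le) hfeas
  set x : Edge n → ℝ := fun e => q' e / p with hx
  have hq'x : q' = fun e => p * x e := by
    funext e; rw [hx]; field_simp
  have hx01 : ∀ e, x e ∈ Set.Icc (0:ℝ) 1 := fun e =>
    ⟨div_nonneg (hq'0 e) hp.le, (div_le_one hp).mpr (hq'p e)⟩
  have hxfeas : expNH H x ≤ η * NHKn H n := by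
    have h := hfeas'
    rw [hq'x, expNH_smul, expNH_const] at h
    have hpow : (0:ℝ) < p ^ H.edgeSet.ncard := pow_pos hp _
    have h2 : p ^ H.edgeSet.ncard * expNH H x ≤ p ^ H.edgeSet.ncard * (η * NHKn H n) := by
      linarith
    exact le_of_mul_le_mul_left h2 hpow
  have hPhi : Phi H n η ≤ ∑ e : Edge n, hfun (x e) :=
    csInf_le (Tset_bddBelow H η) ⟨x, hx01, hxfeas, rfl⟩
  have step1 : ∑ e : Edge n, ip p (q' e) ≤ ∑ e : Edge n, ip p (q e) := by
    refine Finset.sum_le_sum fun e _ => ?_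
    rcases le_total (q e) p with h | h
    · have : q' e = q e := min_eq_left h
      rw [this]
    · have : q' e = p := min_eq_right h
      rw [this, ip_self hp hp1]
      exact ip_nonneg hp hp1 (hq e).1 (hq e).2
  have step2 : p * (∑ e : Edge n, hfun (x e)) - 3 * p ^ 2 * (Fintype.card (Edge n) : ℝ) ≤
      ∑ e : Edge n, ip p (q' e) := by
    have : ∀ e : Edge n, p * hfun (x e) - 3 * p ^ 2 ≤ ip p (q' e) := by
      intro e
      have habs := (abs_le.mp (ip_approx hp hp2 (hx01 e).1 (hx01 e).2)).1
      have hqe : q' e = p * x e := congrFun hq'x e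
      rw [hqe]
      linarith
    have hsum := Finset.sum_le_sum fun e (_ : e ∈ Finset.univ) => this e
    have hs : ∑ e : Edge n, (p * hfun (x e) - 3 * p ^ 2) =
        p * (∑ e : Edge n, hfun (x e)) - 3 * p ^ 2 * (Fintype.card (Edge n) : ℝ) := by
      rw [Finset.sum_sub_distrib, ← Finset.mul_sum, Finset.sum_const, nsmul_eq_mul,
        Finset.card_univ]
      ring
    rw [hs] at hsum
    exact hsum
  have := mul_le_mul_of_nonneg_left hPhi hp.le
  linarith
end Var


/-- `p⁻¹ Φ_p(H, η) → Φ(H, η)` as `p → 0⁺`. -/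
theorem statement15 {k : ℕ} (H : SimpleGraph (Fin k)) (hH : H.edgeSet.Nonempty)
    (n : ℕ) (hn : k ≤ n) (η : ℝ) (hη : η ∈ Set.Icc (0:ℝ) 1) :
    Filter.Tendsto (fun p : ℝ => p⁻¹ * PhiP H n p η)
      (nhdsWithin 0 (Set.Ioi 0)) (nhds (Phi H n η)) := by
  set E : ℝ := (Fintype.card (Edge n) : ℝ) with hE
  have hE0 : 0 ≤ E := by positivity
  have hmem : Set.Ioo (0:ℝ) (1/2) ∈ nhdsWithin (0:ℝ) (Set.Ioi 0) :=
    Ioo_mem_nhdsGT_of_mem ⟨le_refl _, by norm_num⟩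
  have hlow : Filter.Tendsto (fun p : ℝ => Phi H n η - 3 * p * E)
      (nhdsWithin 0 (Set.Ioi 0)) (nhds (Phi H n η)) := by
    have : Filter.Tendsto (fun p : ℝ => Phi H n η - 3 * p * E) (nhds 0)
        (nhds (Phi H n η - 3 * 0 * E)) := by
      exact Filter.Tendsto.const_sub _ (Continuous.tendsto (by continuity) 0)
    simpa using this.mono_left nhdsWithin_le_nhds
  have hup : Filter.Tendsto (fun p : ℝ => Phi H n η + 3 * p * E)
      (nhdsWithin 0 (Set.Ioi 0)) (nhds (Phi H n η)) := by
    have : Filter.Tendsto (fun p : ℝ => Phi H n η + 3 * p * E) (nhds 0)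
        (nhds (Phi H n η + 3 * 0 * E)) := by
      exact Filter.Tendsto.const_add _ (Continuous.tendsto (by continuity) 0)
    simpa using this.mono_left nhdsWithin_le_nhds
  refine tendsto_of_tendsto_of_tendsto_of_le_of_le' hlow hup ?_ ?_
  · refine Filter.eventually_of_mem hmem fun p hp => ?_
    obtain ⟨hp0, hp2⟩ := hp
    have h := le_PhiP (n := n) H η hH hη.1 hp0 (le_of_lt hp2)
    have hinv : 0 < p⁻¹ := inv_pos.mpr hp0
    have := mul_le_mul_of_nonneg_left h hinv.le
    have hc : p⁻¹ * (p * Phi H n η - 3 * p ^ 2 * E) = Phi H n η - 3 * p * E := by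
      field_simp
    rw [hc] at this
    linarith
  · refine Filter.eventually_of_mem hmem fun p hp => ?_
    obtain ⟨hp0, hp2⟩ := hp
    have h := PhiP_le (n := n) H η hH hη.1 hp0 (le_of_lt hp2)
    have hinv : 0 < p⁻¹ := inv_pos.mpr hp0
    have := mul_le_mul_of_nonneg_left h hinv.le
    have hc : p⁻¹ * (p * Phi H n η + 3 * p ^ 2 * E) = Phi H n η + 3 * p * E := by
      field_simp
    rw [hc] at this
    exact this


end LowerTails
end
end

section
/- For every n ≥ 1, every positive integer k, every symmetric matrix M ∈ ℝ^{n×n}, and all vectors x, y ∈ [0,1]^n: |xᵀ·M·y| ≤ n·(Tr(M^{2k}))^{1/(2k)}. In particular Tr(M^{2k}) ≥ 0, and the cut norm satisfies ‖M‖_□ := sup_{x,y ∈ [0,1]^n} (1/n²)·|xᵀMy| ≤ (1/n)·(Tr(M^{2k}))^{1/(2k)}. -/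
open scoped BigOperators

attribute [local instance] Classical.propDecidable

noncomputable section

namespace LowerTails


open Matrix in
private lemma st16_pow_conj {n : ℕ} (U A : Matrix (Fin n) (Fin n) ℝ)
    (hU : star U * U = 1) (hU' : U * star U = 1) (m : ℕ) :
    (star U * A * U) ^ m = star U * A ^ m * U := by
  induction m with
  | zero => simp [hU]
  | succ m ih =>
      rw [pow_succ, ih, pow_succ]
      simp only [Matrix.mul_assoc]
      rw [← Matrix.mul_assoc U (star U), hU', Matrix.one_mul]

open Matrix in
private lemma st16_trace_pow_eq {n : ℕ} (M : Matrix (Fin n) (Fin n) ℝ) (hH : M.IsHermitian)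
    (m : ℕ) : Matrix.trace (M ^ m) = ∑ i, hH.eigenvalues i ^ m := by
  have hU : star (hH.eigenvectorUnitary : Matrix (Fin n) (Fin n) ℝ) *
      (hH.eigenvectorUnitary : Matrix (Fin n) (Fin n) ℝ) = 1 :=
    Unitary.coe_star_mul_self hH.eigenvectorUnitary
  have hU' : (hH.eigenvectorUnitary : Matrix (Fin n) (Fin n) ℝ) *
      star (hH.eigenvectorUnitary : Matrix (Fin n) (Fin n) ℝ) = 1 :=
    Unitary.coe_mul_star_self hH.eigenvectorUnitary
  have hD : star (hH.eigenvectorUnitary : Matrix (Fin n) (Fin n) ℝ) * M *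
      (hH.eigenvectorUnitary : Matrix (Fin n) (Fin n) ℝ) =
      Matrix.diagonal (RCLike.ofReal ∘ hH.eigenvalues) := by
    simpa using hH.conjStarAlgAut_star_eigenvectorUnitary
  have h2 := st16_pow_conj (hH.eigenvectorUnitary : Matrix (Fin n) (Fin n) ℝ) M hU hU' m
  rw [hD] at h2
  have h3 : Matrix.trace
      ((Matrix.diagonal (RCLike.ofReal ∘ hH.eigenvalues) : Matrix (Fin n) (Fin n) ℝ) ^ m)
      = Matrix.trace (M ^ m) := by
    rw [h2, Matrix.trace_mul_cycle, hU', Matrix.one_mul]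
  rw [← h3, Matrix.diagonal_pow, Matrix.trace_diagonal]
  simp [RCLike.ofReal]

open Matrix in
private lemma st16_dot_eq {n : ℕ} (U : Matrix (Fin n) (Fin n) ℝ) (x w : Fin n → ℝ) :
    x ⬝ᵥ (U *ᵥ w) = (star U *ᵥ x) ⬝ᵥ w := by
  rw [Matrix.star_eq_conjTranspose, Matrix.conjTranspose_eq_transpose_of_trivial,
    Matrix.mulVec_transpose, Matrix.dotProduct_mulVec]

open Matrix in
private lemma st16_orth {n : ℕ} (U : Matrix (Fin n) (Fin n) ℝ) (hU' : U * star U = 1)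
    (x : Fin n → ℝ) : (star U *ᵥ x) ⬝ᵥ (star U *ᵥ x) = x ⬝ᵥ x := by
  rw [← st16_dot_eq, Matrix.mulVec_mulVec, hU', Matrix.one_mulVec]

open Matrix in
private lemma st16_bilin_eq {n : ℕ} (M : Matrix (Fin n) (Fin n) ℝ) (hH : M.IsHermitian)
    (x y : Fin n → ℝ) :
    ∑ i, ∑ j, x i * M i j * y j =
      ∑ i, hH.eigenvalues i *
        (((star (hH.eigenvectorUnitary : Matrix (Fin n) (Fin n) ℝ)) *ᵥ x) i *
         ((star (hH.eigenvectorUnitary : Matrix (Fin n) (Fin n) ℝ)) *ᵥ y) i) := by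
  have h1 : ∑ i, ∑ j, x i * M i j * y j = x ⬝ᵥ (M *ᵥ y) := by
    simp [dotProduct, Matrix.mulVec, Finset.mul_sum, mul_assoc]
  rw [h1]
  conv_lhs => rw [hH.spectral_theorem, Unitary.conjStarAlgAut_apply]
  rw [← Matrix.mulVec_mulVec, ← Matrix.mulVec_mulVec, st16_dot_eq]
  simp [dotProduct, Matrix.mulVec_diagonal]
  apply Finset.sum_congr rfl
  intro i _
  ring

/-- bilinear forms of a symmetric matrix against `[0,1]`-vectors are
controlled by traces of even powers, hence so is the cut norm. -/
theorem statement16 (n k : ℕ) (hn : 1 ≤ n) (hk : 1 ≤ k)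
    (M : Matrix (Fin n) (Fin n) ℝ) (hM : M.IsSymm) :
    0 ≤ Matrix.trace (M ^ (2 * k)) ∧
    (∀ x y : Fin n → ℝ, (∀ i, x i ∈ Set.Icc (0:ℝ) 1) → (∀ i, y i ∈ Set.Icc (0:ℝ) 1) →
      |∑ i : Fin n, ∑ j : Fin n, x i * M i j * y j| ≤
        (n : ℝ) * (Matrix.trace (M ^ (2 * k))) ^ ((1 : ℝ) / (2 * k))) ∧
    cutNorm M ≤ (1 / (n : ℝ)) * (Matrix.trace (M ^ (2 * k))) ^ ((1 : ℝ) / (2 * k)) := by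
  have hH : M.IsHermitian := by
    rwa [Matrix.IsHermitian, Matrix.conjTranspose_eq_transpose_of_trivial]
  have htr := st16_trace_pow_eq M hH (2 * k)
  have hT0 : 0 ≤ Matrix.trace (M ^ (2 * k)) := by
    rw [htr]
    exact Finset.sum_nonneg fun i _ => (even_two_mul k).pow_nonneg _
  have hk0 : ((2 * k : ℕ) : ℝ) ≠ 0 := by
    have : 0 < 2 * k := by omega
    exact_mod_cast this.ne'
  have hlam : ∀ i, |hH.eigenvalues i| ≤
      (Matrix.trace (M ^ (2 * k))) ^ ((1 : ℝ) / (2 * k)) := by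
    intro i
    have h1 : |hH.eigenvalues i| ^ (2 * k) ≤ Matrix.trace (M ^ (2 * k)) := by
      rw [htr, ← abs_pow, abs_of_nonneg ((even_two_mul k).pow_nonneg _)]
      exact Finset.single_le_sum (f := fun j => hH.eigenvalues j ^ (2 * k))
        (fun j _ => (even_two_mul k).pow_nonneg _) (Finset.mem_univ i)
    have h2 : |hH.eigenvalues i| =
        ((|hH.eigenvalues i| ^ (2 * k) : ℝ)) ^ ((1 : ℝ) / (2 * k)) := by
      rw [← Real.rpow_natCast |hH.eigenvalues i| (2 * k), ← Real.rpow_mul (abs_nonneg _)]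
      have h3 : ((2 * k : ℕ) : ℝ) * ((1 : ℝ) / (2 * k)) = 1 := by
        push_cast
        field_simp
      rw [h3, Real.rpow_one]
    rw [h2]
    apply Real.rpow_le_rpow (by positivity) h1 (by positivity)
  have key : ∀ x y : Fin n → ℝ, (∀ i, x i ∈ Set.Icc (0:ℝ) 1) → (∀ i, y i ∈ Set.Icc (0:ℝ) 1) →
      |∑ i : Fin n, ∑ j : Fin n, x i * M i j * y j| ≤
        (n : ℝ) * (Matrix.trace (M ^ (2 * k))) ^ ((1 : ℝ) / (2 * k)) := by
    intro x y hx hy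
    have hU' : (hH.eigenvectorUnitary : Matrix (Fin n) (Fin n) ℝ) *
        star (hH.eigenvectorUnitary : Matrix (Fin n) (Fin n) ℝ) = 1 :=
      Unitary.coe_mul_star_self hH.eigenvectorUnitary
    set U : Matrix (Fin n) (Fin n) ℝ := (hH.eigenvectorUnitary : Matrix (Fin n) (Fin n) ℝ)
      with hUdef
    have hsq : ∀ z : Fin n → ℝ, (∀ i, z i ∈ Set.Icc (0:ℝ) 1) →
        ∑ i, |(Matrix.mulVec (star U) z) i| ^ 2 ≤ (n : ℝ) := by
      intro z hz
      have h1 : ∑ i, |(Matrix.mulVec (star U) z) i| ^ 2 =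
          dotProduct z z := by
        rw [← st16_orth U hU' z]
        simp [dotProduct, sq_abs, pow_two]
      rw [h1]
      calc dotProduct z z = ∑ i, z i * z i := rfl
        _ ≤ ∑ _i : Fin n, (1 : ℝ) :=
            Finset.sum_le_sum (fun i _ => by nlinarith [(hz i).1, (hz i).2])
        _ = (n : ℝ) := by simp
    have hCS : ∑ i, |(Matrix.mulVec (star U) x) i| * |(Matrix.mulVec (star U) y) i| ≤ (n : ℝ) := by
      have h1 := Finset.sum_mul_sq_le_sq_mul_sq Finset.univ
        (fun i => |(Matrix.mulVec (star U) x) i|) (fun i => |(Matrix.mulVec (star U) y) i|)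
      have h2 : (∑ i, |(Matrix.mulVec (star U) x) i| * |(Matrix.mulVec (star U) y) i|) ^ 2 ≤
          (n : ℝ) ^ 2 := by
        refine h1.trans ?_
        rw [sq]
        exact mul_le_mul (hsq x hx) (hsq y hy)
          (Finset.sum_nonneg fun i _ => by positivity) (by positivity)
      exact le_of_pow_le_pow_left₀ two_ne_zero (by positivity) h2
    calc |∑ i : Fin n, ∑ j : Fin n, x i * M i j * y j|
        = |∑ i, hH.eigenvalues i *
            ((Matrix.mulVec (star U) x) i * (Matrix.mulVec (star U) y) i)| := by
          rw [st16_bilin_eq M hH x y]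
      _ ≤ ∑ i, |hH.eigenvalues i *
            ((Matrix.mulVec (star U) x) i * (Matrix.mulVec (star U) y) i)| :=
          Finset.abs_sum_le_sum_abs _ _
      _ = ∑ i, |hH.eigenvalues i| *
            (|(Matrix.mulVec (star U) x) i| * |(Matrix.mulVec (star U) y) i|) := by
          simp [abs_mul]
      _ ≤ ∑ i, (Matrix.trace (M ^ (2 * k))) ^ ((1 : ℝ) / (2 * k)) *
            (|(Matrix.mulVec (star U) x) i| * |(Matrix.mulVec (star U) y) i|) :=
          Finset.sum_le_sum (fun i _ =>
            mul_le_mul_of_nonneg_right (hlam i) (by positivity))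
      _ = (Matrix.trace (M ^ (2 * k))) ^ ((1 : ℝ) / (2 * k)) *
            ∑ i, |(Matrix.mulVec (star U) x) i| * |(Matrix.mulVec (star U) y) i| := by
          rw [← Finset.mul_sum]
      _ ≤ (Matrix.trace (M ^ (2 * k))) ^ ((1 : ℝ) / (2 * k)) * (n : ℝ) :=
          mul_le_mul_of_nonneg_left hCS (Real.rpow_nonneg hT0 _)
      _ = (n : ℝ) * (Matrix.trace (M ^ (2 * k))) ^ ((1 : ℝ) / (2 * k)) := mul_comm _ _
  refine ⟨hT0, key, ?_⟩
  have hn0 : (0 : ℝ) < n := by exact_mod_cast hn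
  have hbnd0 : 0 ≤ 1 / (n : ℝ) * (Matrix.trace (M ^ (2 * k))) ^ ((1 : ℝ) / (2 * k)) :=
    mul_nonneg (by positivity) (Real.rpow_nonneg hT0 _)
  rw [cutNorm]
  apply Real.sSup_le _ hbnd0
  rintro v ⟨a, b, ha, hb, rfl⟩
  rw [div_le_iff₀ (by positivity)]
  calc |∑ i : Fin n, ∑ j : Fin n, a i * M i j * b j|
      ≤ (n : ℝ) * (Matrix.trace (M ^ (2 * k))) ^ ((1 : ℝ) / (2 * k)) := key a b ha hb
    _ = 1 / (n : ℝ) * (Matrix.trace (M ^ (2 * k))) ^ ((1 : ℝ) / (2 * k)) * (n : ℝ) ^ 2 := by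
        field_simp


end LowerTails
end
end
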